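/- Localisation theorem: Let R be a commutative ring, M an R-module, b a biderivation on R with values in M, and Σ a multiplicative submonoid of R with 0 ∉ Σ. Then there is a unique biderivation b' on the localization Σ⁻¹R with values in the localized module Σ⁻¹M extending b, i.e., satisfying b'(r/1, r'/1) = b(r,r')/1 for all r, r' ∈ R. Moreover this extension is lifting: for every pair of ideals I, J of R with b(I×R) ⊆ I·M and b(R×J) ⊆ J·M, the extended ideals satisfy b'((I·Σ⁻¹R) × Σ⁻¹R) ⊆ (I·Σ⁻¹R)·(Σ⁻¹M) and b'(Σ⁻¹R × (J·Σ⁻¹R)) ⊆ (J·Σ⁻¹R)·(Σ⁻¹M). -/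

import Mathlib

/-- An `M`-valued derivation on a commutative ring `T`. -/
def IsDerivationFun {T M : Type*} [CommRing T] [AddCommGroup M] [Module T M]
    (d : T → M) : Prop :=
  (∀ x y : T, d (x + y) = d x + d y) ∧ (∀ x y : T, d (x * y) = x • d y + y • d x)

/-- An `M`-valued biderivation on a commutative ring `R`: a map `R → R → M` that is a
derivation in each argument. -/
def IsBiderivationFun {R M : Type*} [CommRing R] [AddCommGroup M] [Module R M]
    (b : R → R → M) : Prop :=
  (∀ r : R, IsDerivationFun (b r)) ∧ (∀ s : R, IsDerivationFun (fun r => b r s))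

section Aux

variable {R M : Type*} [CommRing R] [AddCommGroup M] [Module R M]

lemma IsDerivationFun.one' {T N : Type*} [CommRing T] [AddCommGroup N] [Module T N]
    {d : T → N} (h : IsDerivationFun d) : d 1 = 0 := by
  have h1 := h.2 1 1
  rw [one_mul, one_smul] at h1
  exact (left_eq_add.mp h1)

lemma IsDerivationFun.zero' {T N : Type*} [CommRing T] [AddCommGroup N] [Module T N]
    {d : T → N} (h : IsDerivationFun d) : d 0 = 0 := by
  have h1 := h.1 0 0
  rw [add_zero] at h1
  exact (left_eq_add.mp h1)

lemma IsDerivationFun.triple {T N : Type*} [CommRing T] [AddCommGroup N] [Module T N]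
    {d : T → N} (h : IsDerivationFun d) (u v w : T) :
    d (u * (v * w)) = (v * w) • d u + (u * w) • d v + (u * v) • d w := by
  rw [h.2 u (v*w), h.2 v w]
  module

variable {Msub : Submonoid R}

/-- numerator of the localized biderivation on representatives. -/
def gNum (b : R → R → M) (r : R) (s : Msub) (r' : R) (s' : Msub) : M :=
  ((s : R) * (s' : R)) • b r r' - ((s : R) * r') • b r s' - ((s' : R) * r) • b s r'
    + (r * r') • b s s'

lemma wd2 (b : R → R → M) (hd : ∀ x : R, IsDerivationFun (b x)) (r : R) (s : Msub)
    {r₁ r₂ : R} {s₁ s₂ : Msub} (h : Localization.r Msub (r₁, s₁) (r₂, s₂)) :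
    LocalizedModule.mk (gNum b r s r₁ s₁) ((s * s₁) * (s * s₁))
      = LocalizedModule.mk (gNum b r s r₂ s₂) ((s * s₂) * (s * s₂)) := by
  obtain ⟨c, hc⟩ := Localization.r_iff_exists.mp h
  simp only at hc
  have H1 := congrArg (b r) hc
  rw [(hd r).triple, (hd r).triple] at H1
  have H2 := congrArg (b s) hc
  rw [(hd s).triple, (hd s).triple] at H2
  refine LocalizedModule.mk_eq.mpr ⟨c * c, ?_⟩
  simp only [Submonoid.smul_def, Submonoid.coe_mul, gNum]
  linear_combination (norm := module)
    ((c : R) * s * s * s * s₁ * s₂) • H1 - ((c : R) * s * s * s₁ * s₂ * r) • H2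
    - ((s : R) * s * s * s₁ * s₂) • (hc • (b r c))
    - ((c : R) * s * s * s * s₂) • (hc • (b r s₁))
    - ((c : R) * s * s * s * s₁) • (hc • (b r s₂))
    + ((s : R) * s * s₁ * s₂ * r) • (hc • (b s c))
    + ((c : R) * s * s * s₂ * r) • (hc • (b s s₁))
    + ((c : R) * s * s * s₁ * r) • (hc • (b s s₂))

end Aux

section Aux2

variable {R M : Type*} [CommRing R] [AddCommGroup M] [Module R M] {Msub : Submonoid R}

lemma gNum_flip (b : R → R → M) (r : R) (s : Msub) (r' : R) (s' : Msub) :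
    LocalizedModule.mk (gNum b r s r' s') ((s * s') * (s * s'))
      = LocalizedModule.mk (gNum (fun x y => b y x) r' s' r s) ((s' * s) * (s' * s)) := by
  refine LocalizedModule.mk_eq.mpr ⟨1, ?_⟩
  simp only [Submonoid.smul_def, Submonoid.coe_mul, Submonoid.coe_one, gNum]
  match_scalars <;> ring

lemma wd1 (b : R → R → M) (hb : IsBiderivationFun b) (r' : R) (s' : Msub)
    {r₁ r₂ : R} {s₁ s₂ : Msub} (h : Localization.r Msub (r₁, s₁) (r₂, s₂)) :
    LocalizedModule.mk (gNum b r₁ s₁ r' s') ((s₁ * s') * (s₁ * s'))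
      = LocalizedModule.mk (gNum b r₂ s₂ r' s') ((s₂ * s') * (s₂ * s')) := by
  rw [gNum_flip b r₁ s₁ r' s', gNum_flip b r₂ s₂ r' s']
  exact wd2 (fun x y => b y x) (fun x => hb.2 x) r' s' h

/-- The localized biderivation. -/
def bLoc (b : R → R → M) (hb : IsBiderivationFun b) :
    Localization Msub → Localization Msub → LocalizedModule Msub M := fun x y =>
  Localization.liftOn₂ x y
    (fun r s r' s' => LocalizedModule.mk (gNum b r s r' s') ((s * s') * (s * s')))
    (fun h1 h2 => by
      exact (wd1 b hb _ _ h1).trans (wd2 b hb.1 _ _ h2))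

lemma bLoc_mk (b : R → R → M) (hb : IsBiderivationFun b) (r : R) (s : Msub) (r' : R)
    (s' : Msub) : bLoc b hb (Localization.mk r s) (Localization.mk r' s')
      = LocalizedModule.mk (gNum b r s r' s') ((s * s') * (s * s')) := rfl

lemma bLoc_flip (b : R → R → M) (hb : IsBiderivationFun b) (x y : Localization Msub) :
    bLoc b hb x y = bLoc (fun a c => b c a) ⟨hb.2, hb.1⟩ y x := by
  induction x using Localization.induction_on with | _ p =>
  induction y using Localization.induction_on with | _ q =>
  rw [bLoc_mk]
  exact gNum_flip b p.1 p.2 q.1 q.2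

end Aux2

section Aux3

variable {R M : Type*} [CommRing R] [AddCommGroup M] [Module R M] {Msub : Submonoid R}

lemma bLoc_add₂ (b : R → R → M) (hb : IsBiderivationFun b) (x y z : Localization Msub) :
    bLoc b hb x (y + z) = bLoc b hb x y + bLoc b hb x z := by
  induction x using Localization.induction_on with | _ p =>
  induction y using Localization.induction_on with | _ q =>
  induction z using Localization.induction_on with | _ w =>
  obtain ⟨r, s⟩ := p; obtain ⟨r₁, s₁⟩ := q; obtain ⟨r₂, s₂⟩ := w
  rw [Localization.add_mk, bLoc_mk, bLoc_mk, bLoc_mk, LocalizedModule.mk_add_mk]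
  refine LocalizedModule.mk_eq.mpr ⟨1, ?_⟩
  simp only [Submonoid.smul_def, Submonoid.coe_mul, Submonoid.coe_one, gNum,
    (hb.1 r).1, (hb.1 r).2, (hb.1 s).1, (hb.1 s).2]
  module

lemma bLoc_mul₂ (b : R → R → M) (hb : IsBiderivationFun b) (x y z : Localization Msub) :
    bLoc b hb x (y * z) = y • bLoc b hb x z + z • bLoc b hb x y := by
  induction x using Localization.induction_on with | _ p =>
  induction y using Localization.induction_on with | _ q =>
  induction z using Localization.induction_on with | _ w =>
  obtain ⟨r, s⟩ := p; obtain ⟨r₁, s₁⟩ := q; obtain ⟨r₂, s₂⟩ := w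
  rw [Localization.mk_mul, bLoc_mk, bLoc_mk, bLoc_mk, LocalizedModule.mk_smul_mk,
    LocalizedModule.mk_smul_mk, LocalizedModule.mk_add_mk]
  refine LocalizedModule.mk_eq.mpr ⟨1, ?_⟩
  simp only [Submonoid.smul_def, Submonoid.coe_mul, Submonoid.coe_one, gNum, smul_sub,
    smul_add, smul_smul, (hb.1 r).1, (hb.1 r).2, (hb.1 s).1, (hb.1 s).2]
  module

lemma bLoc_isBider (b : R → R → M) (hb : IsBiderivationFun b) :
    IsBiderivationFun (bLoc b hb (Msub := Msub)) := by
  constructor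
  · exact fun x => ⟨fun y z => bLoc_add₂ b hb x y z, fun y z => bLoc_mul₂ b hb x y z⟩
  · intro y
    constructor
    · intro x z
      show bLoc b hb (x + z) y = bLoc b hb x y + bLoc b hb z y
      rw [bLoc_flip b hb _ y, bLoc_flip b hb x y, bLoc_flip b hb z y]
      exact bLoc_add₂ _ _ y x z
    · intro x z
      show bLoc b hb (x * z) y = x • bLoc b hb z y + z • bLoc b hb x y
      rw [bLoc_flip b hb _ y, bLoc_flip b hb x y, bLoc_flip b hb z y]
      exact bLoc_mul₂ _ _ y x z

end Aux3

section Aux4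

variable {R M : Type*} [CommRing R] [AddCommGroup M] [Module R M] {Msub : Submonoid R}

lemma bLoc_algebraMap (b : R → R → M) (hb : IsBiderivationFun b) (x y : R) :
    bLoc b hb (algebraMap R (Localization Msub) x) (algebraMap R (Localization Msub) y)
      = LocalizedModule.mkLinearMap Msub M (b x y) := by
  rw [← Localization.mk_one_eq_algebraMap, ← Localization.mk_one_eq_algebraMap, bLoc_mk]
  have e1 : b x 1 = 0 := (hb.1 x).one'
  have e2 : b 1 y = 0 := (hb.2 y).one'
  have e3 : b 1 1 = 0 := (hb.2 1).one'
  have : LocalizedModule.mkLinearMap Msub M (b x y) = LocalizedModule.mk (b x y) 1 :=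
    LocalizedModule.mkLinearMap_apply _ _ _
  rw [this]
  refine LocalizedModule.mk_eq.mpr ⟨1, ?_⟩
  simp only [gNum, e1, e2, e3, smul_zero, sub_zero, add_zero, Submonoid.smul_def,
    Submonoid.coe_one, one_mul, one_smul, Submonoid.coe_mul]

lemma der_ext {N : Type*} [AddCommGroup N] [Module (Localization Msub) N]
    (D₁ D₂ : Localization Msub → N) (h₁ : IsDerivationFun D₁) (h₂ : IsDerivationFun D₂)
    (h : ∀ r : R, D₁ (algebraMap R (Localization Msub) r) = D₂ (algebraMap R _ r)) :
    D₁ = D₂ := by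
  funext x
  induction x using Localization.induction_on with | _ p =>
  obtain ⟨r, s⟩ := p
  have key : (algebraMap R (Localization Msub) (s : R)) * Localization.mk r s
      = algebraMap R (Localization Msub) r := by
    rw [← Localization.mk_one_eq_algebraMap, ← Localization.mk_one_eq_algebraMap,
      Localization.mk_mul]
    refine Localization.mk_eq_mk_iff.mpr (Localization.r_iff_exists.mpr ⟨1, ?_⟩)
    push_cast
    ring
  have e1 := h₁.2 (algebraMap R (Localization Msub) (s : R)) (Localization.mk r s)
  have e2 := h₂.2 (algebraMap R (Localization Msub) (s : R)) (Localization.mk r s)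
  rw [key] at e1 e2
  have main : (algebraMap R (Localization Msub) (s : R)) • D₁ (Localization.mk r s)
      = (algebraMap R (Localization Msub) (s : R)) • D₂ (Localization.mk r s) := by
    have t1 : (algebraMap R (Localization Msub) (s : R)) • D₁ (Localization.mk r s)
        = D₁ (algebraMap R (Localization Msub) r)
          - (Localization.mk r s) • D₁ (algebraMap R (Localization Msub) (s : R)) := by
      rw [e1]; abel
    have t2 : (algebraMap R (Localization Msub) (s : R)) • D₂ (Localization.mk r s)
        = D₂ (algebraMap R (Localization Msub) r)
          - (Localization.mk r s) • D₂ (algebraMap R (Localization Msub) (s : R)) := by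
      rw [e2]; abel
    rw [t1, t2, h r, h (s : R)]
  exact (IsUnit.smul_left_cancel (IsLocalization.map_units (Localization Msub) s)).mp main

lemma bLoc_unique (b : R → R → M) (hb : IsBiderivationFun b)
    (b'' : Localization Msub → Localization Msub → LocalizedModule Msub M)
    (hbider : IsBiderivationFun b'')
    (hext : ∀ x y : R, b'' (algebraMap R (Localization Msub) x)
      (algebraMap R (Localization Msub) y) = LocalizedModule.mkLinearMap Msub M (b x y)) :
    b'' = bLoc b hb := by
  have step1 : ∀ r : R, (b'' (algebraMap R (Localization Msub) r))
      = (bLoc b hb (algebraMap R (Localization Msub) r)) := fun r =>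
    der_ext _ _ (hbider.1 _) ((bLoc_isBider b hb).1 _)
      (fun r' => by rw [hext, bLoc_algebraMap])
  have step2 : ∀ y : Localization Msub, (fun x => b'' x y) = (fun x => bLoc b hb x y) :=
    fun y => der_ext _ _ (hbider.2 y) ((bLoc_isBider b hb).2 y)
      (fun r => congrFun (step1 r) y)
  funext x y
  exact congrFun (step2 y) x

end Aux4

section Aux5

variable {R M : Type*} [CommRing R] [AddCommGroup M] [Module R M] {Msub : Submonoid R}

lemma mk_mem_smul {I : Ideal R} {m : M} (hm : m ∈ I • (⊤ : Submodule R M)) (t : Msub) :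
    LocalizedModule.mk m t ∈ Ideal.map (algebraMap R (Localization Msub)) I •
      (⊤ : Submodule (Localization Msub) (LocalizedModule Msub M)) := by
  have H : ∀ t' : Msub, LocalizedModule.mk m t' ∈
      Ideal.map (algebraMap R (Localization Msub)) I •
      (⊤ : Submodule (Localization Msub) (LocalizedModule Msub M)) := by
    refine Submodule.smul_induction_on hm ?_ ?_
    · intro r hr n _ t'
      have : LocalizedModule.mk (r • n) t'
          = Localization.mk r (1 : Msub) • LocalizedModule.mk n t' := by
        rw [LocalizedModule.mk_smul_mk, one_mul]
      rw [this, Localization.mk_one_eq_algebraMap]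
      exact Submodule.smul_mem_smul (Ideal.mem_map_of_mem _ hr) trivial
    · intro m₁ m₂ h₁ h₂ t'
      have : LocalizedModule.mk (m₁ + m₂) t'
          = LocalizedModule.mk m₁ t' + LocalizedModule.mk m₂ t' := by
        rw [LocalizedModule.mk_add_mk, ← smul_add, LocalizedModule.mk_cancel_common_left]
      rw [this]
      exact add_mem (h₁ t') (h₂ t')
  exact H t

lemma bLoc_lift (b : R → R → M) (hb : IsBiderivationFun b) (I : Ideal R)
    (hI : ∀ i ∈ I, ∀ r : R, b i r ∈ I • (⊤ : Submodule R M)) :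
    ∀ x ∈ Ideal.map (algebraMap R (Localization Msub)) I, ∀ y : Localization Msub,
      bLoc b hb x y ∈ Ideal.map (algebraMap R (Localization Msub)) I •
        (⊤ : Submodule (Localization Msub) (LocalizedModule Msub M)) := by
  intro x hx
  have hx' : x ∈ Submodule.span (Localization Msub)
      ((algebraMap R (Localization Msub)) '' I) := hx
  refine Submodule.span_induction ?_ ?_ ?_ ?_ hx'
  · rintro x ⟨i, hi, rfl⟩ y
    induction y using Localization.induction_on with | _ q =>
    obtain ⟨r', s'⟩ := q
    rw [← Localization.mk_one_eq_algebraMap, bLoc_mk]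
    refine mk_mem_smul ?_ _
    have e1 : b 1 r' = 0 := (hb.2 r').one'
    have e2 : b 1 ((s' : R)) = 0 := (hb.2 (s' : R)).one'
    simp only [gNum, Submonoid.coe_one, e1, e2, smul_zero, add_zero, sub_zero, one_mul]
    exact sub_mem (Submodule.smul_mem _ _ (hI i hi r')) (Submodule.smul_mem _ _ (hI i hi s'))
  · intro y
    have : bLoc b hb 0 y = 0 := ((bLoc_isBider b hb).2 y).zero'
    rw [this]
    exact zero_mem _
  · intro x z _ _ hx hz y
    have : bLoc b hb (x + z) y = bLoc b hb x y + bLoc b hb z y := ((bLoc_isBider b hb).2 y).1 x z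
    rw [this]
    exact add_mem (hx y) (hz y)
  · intro a x hmem hx y
    rw [smul_eq_mul]
    have : bLoc b hb (a * x) y = a • bLoc b hb x y + x • bLoc b hb a y :=
      ((bLoc_isBider b hb).2 y).2 a x
    rw [this]
    exact add_mem (Submodule.smul_mem _ _ (hx y)) (Submodule.smul_mem_smul hmem trivial)

end Aux5

/-- Localisation theorem (Theorem 2.9 of "Commutative bidifferential algebra"):
a biderivation on `R` with values in `M` extends uniquely to the localisation at a
multiplicative set avoiding `0`, and the extension is lifting. -/
theorem biderivation_localization
    {R M : Type*} [CommRing R] [AddCommGroup M] [Module R M]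
    (b : R → R → M) (hb : IsBiderivationFun b)
    (Msub : Submonoid R) (h0 : (0 : R) ∉ Msub) :
    ∃ b' : Localization Msub → Localization Msub → LocalizedModule Msub M,
      (IsBiderivationFun b' ∧
        ∀ x y : R, b' (algebraMap R (Localization Msub) x) (algebraMap R (Localization Msub) y)
          = LocalizedModule.mkLinearMap Msub M (b x y)) ∧
      (∀ b'' : Localization Msub → Localization Msub → LocalizedModule Msub M,
        (IsBiderivationFun b'' ∧
          ∀ x y : R, b'' (algebraMap R (Localization Msub) x) (algebraMap R (Localization Msub) y)
            = LocalizedModule.mkLinearMap Msub M (b x y)) → b'' = b') ∧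
      (∀ I J : Ideal R,
        (∀ i ∈ I, ∀ r : R, b i r ∈ I • (⊤ : Submodule R M)) →
        (∀ r : R, ∀ j ∈ J, b r j ∈ J • (⊤ : Submodule R M)) →
        (∀ x ∈ Ideal.map (algebraMap R (Localization Msub)) I, ∀ y : Localization Msub,
          b' x y ∈ Ideal.map (algebraMap R (Localization Msub)) I •
            (⊤ : Submodule (Localization Msub) (LocalizedModule Msub M))) ∧
        (∀ x : Localization Msub, ∀ y ∈ Ideal.map (algebraMap R (Localization Msub)) J,
          b' x y ∈ Ideal.map (algebraMap R (Localization Msub)) J •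
            (⊤ : Submodule (Localization Msub) (LocalizedModule Msub M)))) := by
  refine ⟨bLoc b hb, ⟨bLoc_isBider b hb, bLoc_algebraMap b hb⟩, ?_, ?_⟩
  · rintro b'' ⟨h1, h2⟩
    exact bLoc_unique b hb b'' h1 h2
  · intro I J hI hJ
    refine ⟨bLoc_lift b hb I hI, ?_⟩
    intro x y hy
    rw [bLoc_flip b hb x y]
    exact bLoc_lift (fun a c => b c a) ⟨hb.2, hb.1⟩ J (fun j hj r => hJ r j hj) y hy x
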